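/- Let m ≥ 2. Then there is no tuple of functions λ^1, …, λ^m : ℂ^m → ℂ, all continuous on the whole space ℂ^m, such that for every M = (a_0, …, a_{m−1}) ∈ ℂ^m one has the factorization λ^m − a_{m−1}λ^{m−1} − ⋯ − a_1λ − a_0 = (λ − λ^1(M)) ⋯ (λ − λ^m(M)) as polynomials in λ. -/

import Mathlib

open Polynomial

/-- for `m ≥ 2` there is no full set of roots
`λ^1, …, λ^m : ℂ^m → ℂ` of the family `M ↦ λ^m - a_{m-1} λ^{m-1} - ⋯ - a_0`
with all the functions `λ^i` continuous on the whole space `ℂ^m`. -/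
theorem no_globally_continuous_full_root_set (m : ℕ) (hm : 2 ≤ m) :
    ¬ ∃ lam : Fin m → (Fin m → ℂ) → ℂ,
        (∀ i : Fin m, Continuous (lam i)) ∧
        ∀ M : Fin m → ℂ,
          X ^ m - ∑ j : Fin m, C (M j) * X ^ (j : ℕ) =
            ∏ i : Fin m, (X - C (lam i M)) := by
  haveI : NeZero m := ⟨by omega⟩
  rintro ⟨lam, hcont, hfact⟩
  -- the coefficient tuple of `X ^ m - C a`
  set Mf : ℂ → (Fin m → ℂ) := fun a j => if j = 0 then a else 0 with hMf
  -- a continuous `m`-th root function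
  set f : ℂ → ℂ := fun a => lam 0 (Mf a) with hf
  have hfc : Continuous f := by
    refine (hcont 0).comp (continuous_pi fun j => ?_)
    by_cases hj : j = 0
    · simpa [hMf, hj] using continuous_id'
    · simpa [hMf, hj] using continuous_const
  have hroot : ∀ a : ℂ, f a ^ m = a := by
    intro a
    have h := congrArg (Polynomial.eval (f a)) (hfact (Mf a))
    simp only [eval_sub, eval_pow, eval_X, eval_finset_sum, eval_mul, eval_C, eval_prod] at h
    rw [Finset.prod_eq_zero (Finset.mem_univ (0 : Fin m)) (by simp [hf])] at h
    have hsum : ∑ j : Fin m, Mf a j * f a ^ (j : ℕ) = a := by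
      rw [Finset.sum_eq_single (0 : Fin m)]
      · simp [hMf]
      · intro b _ hb; simp [hMf, hb]
      · intro hb; exact absurd (Finset.mem_univ _) hb
    rw [hsum, sub_eq_zero] at h
    exact h
  have hm0 : (m : ℂ) ≠ 0 := Nat.cast_ne_zero.mpr (by omega)
  -- loop around the unit circle
  set g : ℝ → ℂ := fun t => f (Complex.exp (t * Complex.I)) *
      Complex.exp (-(t * Complex.I) / m) with hg
  have hgc : Continuous g := by
    apply Continuous.mul
    · exact hfc.comp (Complex.continuous_exp.comp (by continuity))
    · exact Complex.continuous_exp.comp (by continuity)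
  have hgT : ∀ t : ℝ, g t ^ m = 1 := by
    intro t
    have : Complex.exp (-((t : ℂ) * Complex.I) / m) ^ m
        = Complex.exp (-((t : ℂ) * Complex.I)) := by
      rw [← Complex.exp_nat_mul]
      congr 1
      field_simp
    rw [hg]
    simp only [mul_pow, hroot, this, ← Complex.exp_add]
    simp
  -- the set of `m`-th roots of unity is finite, hence discrete
  set T : Set ℂ := {z : ℂ | z ^ m = 1} with hT
  have hTfin : T.Finite := by
    have : T ⊆ (Polynomial.nthRoots m (1 : ℂ)).toFinset := by
      intro z hz
      simp only [Finset.mem_coe, Multiset.mem_toFinset,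
        Polynomial.mem_nthRoots (by omega : 0 < m)]
      exact hz
    exact Set.Finite.subset (Finset.finite_toSet _) this
  haveI : Finite T := hTfin.to_subtype
  have key : g 0 = g (2 * Real.pi) :=
    IsPreconnected.constant_of_mapsTo isPreconnected_univ (isDiscrete_iff_discreteTopology.mpr inferInstance) hgc.continuousOn
      (fun t _ => show g t ∈ T from hgT t) trivial trivial
  have hg0 : g 0 = f 1 := by
    simp [hg]
  have hg2 : g (2 * Real.pi) = f 1 * Complex.exp (-(2 * Real.pi * Complex.I) / m) := by
    rw [hg]
    push_cast
    rw [Complex.exp_two_pi_mul_I]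
  have hf1 : f 1 ≠ 0 := by
    intro h
    have := hroot 1
    rw [h] at this
    simp [zero_pow (by omega : m ≠ 0)] at this
  have heq : f 1 = f 1 * Complex.exp (-(2 * Real.pi * Complex.I) / m) := by
    have h := key; rw [hg0, hg2] at h; exact h
  have hexp1 : Complex.exp (-(2 * Real.pi * Complex.I) / m) = 1 :=
    mul_left_cancel₀ hf1 (by rw [mul_one, ← heq])
  obtain ⟨n, hn⟩ := Complex.exp_eq_one_iff.mp hexp1
  rw [div_eq_iff hm0] at hn
  have hC : (n : ℂ) * m + 1 = 0 := by
    have h2 := Complex.two_pi_I_ne_zero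
    have h3 : ((n : ℂ) * m + 1) * (2 * Real.pi * Complex.I) = 0 := by
      linear_combination -hn
    exact (mul_eq_zero.mp h3).resolve_right h2
  have hZ : (n * (m : ℤ)) = -1 := by
    exact_mod_cast (by linear_combination hC : ((n : ℂ) * m) = -1)
  have hdvd : (m : ℤ) ∣ 1 := ⟨-n, by linarith⟩
  have := Int.le_of_dvd one_pos hdvd
  omega
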